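/- For z ∈ [0,1] and θ ∈ (0,1), the Massart-type exponent M'_B(z, θ) = 9(z − θ)²/(2(z + 2θ)(z + 2θ − 3)) satisfies M'_B(z, θ) ≥ M_B(z, θ), where M_B(z, θ) = z·ln(θ/z) + (1−z)·ln((1−θ)/(1−z)) (with the conventions M_B(0,θ) = ln(1−θ), M_B(1,θ) = ln θ). -/

import Mathlib

/-- Massart-type exponent. -/
noncomputable def MB' (z θ : ℝ) : ℝ :=
  9 * (z - θ) ^ 2 / (2 * (z + 2 * θ) * (z + 2 * θ - 3))

/-- `M_B(z, θ) = z·ln(θ/z) + (1−z)·ln((1−θ)/(1−z))`; the formula also realizes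
the conventions `M_B(0,θ) = ln(1−θ)` and `M_B(1,θ) = ln θ`. -/
noncomputable def MB (z θ : ℝ) : ℝ :=
  z * Real.log (θ / z) + (1 - z) * Real.log ((1 - θ) / (1 - z))


noncomputable def hfun (x : ℝ) : ℝ :=
  Real.log x - 3 * (x - 1) * (x + 5) / (2 * (x + 2) ^ 2)

lemma hfun_hasDeriv {x : ℝ} (hx : 0 < x) :
    HasDerivAt hfun ((x - 1) ^ 2 * (x + 8) / (x * (x + 2) ^ 3)) x := by
  have hnum : HasDerivAt (fun y : ℝ => 3 * (y - 1) * (y + 5)) (3 * (2 * x + 4)) x := by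
    have := (((hasDerivAt_id x).sub_const 1).const_mul 3).mul ((hasDerivAt_id x).add_const 5)
    refine this.congr_deriv ?_; simp [id]; ring
  have hden : HasDerivAt (fun y : ℝ => 2 * (y + 2) ^ 2) (4 * (x + 2)) x := by
    have := (((hasDerivAt_id x).add_const 2).pow 2).const_mul 2
    refine this.congr_deriv ?_; simp [id]; ring
  have hd : (2 : ℝ) * (x + 2) ^ 2 ≠ 0 := by positivity
  have h2 := hnum.div hden hd
  have := (Real.hasDerivAt_log hx.ne').sub h2
  refine this.congr_deriv ?_
  field_simp
  ring

lemma hfun_nonneg {x : ℝ} (hx : 1 ≤ x) : 0 ≤ hfun x := by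
  have h1 : hfun 1 = 0 := by simp [hfun]
  have hmono : MonotoneOn hfun (Set.Icc 1 x) := by
    apply monotoneOn_of_deriv_nonneg (convex_Icc 1 x)
    · intro y hy
      simp only [Set.mem_Icc] at hy
      exact ((hfun_hasDeriv (by linarith [hy.1] : (0:ℝ) < y)).continuousAt).continuousWithinAt
    · intro y hy
      rw [interior_Icc] at hy
      exact ((hfun_hasDeriv (by linarith [hy.1] : (0:ℝ) < y)).differentiableAt).differentiableWithinAt
    · intro y hy
      rw [interior_Icc] at hy
      have hy0 : (0:ℝ) < y := by linarith [hy.1]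
      rw [(hfun_hasDeriv hy0).deriv]
      positivity
  have := hmono (Set.left_mem_Icc.mpr hx) (Set.right_mem_Icc.mpr hx) hx
  rwa [h1] at this

lemma hfun_nonpos {x : ℝ} (hx0 : 0 < x) (hx : x ≤ 1) : hfun x ≤ 0 := by
  have h1 : hfun 1 = 0 := by simp [hfun]
  have hmono : MonotoneOn hfun (Set.Icc x 1) := by
    apply monotoneOn_of_deriv_nonneg (convex_Icc x 1)
    · intro y hy
      simp only [Set.mem_Icc] at hy
      exact ((hfun_hasDeriv (by linarith [hy.1] : (0:ℝ) < y)).continuousAt).continuousWithinAt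
    · intro y hy
      rw [interior_Icc] at hy
      exact ((hfun_hasDeriv (by linarith [hy.1] : (0:ℝ) < y)).differentiableAt).differentiableWithinAt
    · intro y hy
      rw [interior_Icc] at hy
      have hy0 : (0:ℝ) < y := by linarith [hy.1]
      rw [(hfun_hasDeriv hy0).deriv]
      positivity
  have := hmono (Set.left_mem_Icc.mpr hx) (Set.right_mem_Icc.mpr hx) hx
  rwa [h1] at this

noncomputable def gfun (x : ℝ) : ℝ := x * Real.log x - x + 1 - 3 * (x - 1) ^ 2 / (2 * (x + 2))

lemma gfun_hasDeriv {x : ℝ} (hx : 0 < x) : HasDerivAt gfun (hfun x) x := by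
  have h1 : HasDerivAt (fun y : ℝ => y * Real.log y) (Real.log x + 1) x := by
    have := (hasDerivAt_id x).mul (Real.hasDerivAt_log hx.ne')
    refine this.congr_deriv ?_
    field_simp
    simp only [id]; ring
  have hnum : HasDerivAt (fun y : ℝ => 3 * (y - 1) ^ 2) (3 * (2 * (x - 1))) x := by
    have := (((hasDerivAt_id x).sub_const 1).pow 2).const_mul 3
    refine this.congr_deriv ?_; simp [id]
  have hden : HasDerivAt (fun y : ℝ => 2 * (y + 2)) 2 x := by
    have := ((hasDerivAt_id x).add_const 2).const_mul 2
    refine this.congr_deriv ?_; simp [id]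
  have hd : (2 : ℝ) * (x + 2) ≠ 0 := by positivity
  have h2 := hnum.div hden hd
  have h3 := (h1.sub (hasDerivAt_id x)).add_const 1
  have := h3.sub h2
  refine this.congr_deriv ?_
  unfold hfun
  field_simp
  ring

lemma gfun_nonneg {x : ℝ} (hx : 0 < x) : 0 ≤ gfun x := by
  have hg1 : gfun 1 = 0 := by simp [gfun]
  rcases le_or_gt 1 x with h1 | h1
  · have hmono : MonotoneOn gfun (Set.Icc 1 x) := by
      apply monotoneOn_of_deriv_nonneg (convex_Icc 1 x)
      · intro y hy
        simp only [Set.mem_Icc] at hy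
        exact ((gfun_hasDeriv (by linarith [hy.1] : (0:ℝ) < y)).continuousAt).continuousWithinAt
      · intro y hy
        rw [interior_Icc] at hy
        exact ((gfun_hasDeriv (by linarith [hy.1] : (0:ℝ) < y)).differentiableAt).differentiableWithinAt
      · intro y hy
        rw [interior_Icc] at hy
        rw [(gfun_hasDeriv (by linarith [hy.1] : (0:ℝ) < y)).deriv]
        exact hfun_nonneg hy.1.le
    have := hmono (Set.left_mem_Icc.mpr h1) (Set.right_mem_Icc.mpr h1) h1
    rwa [hg1] at this
  · have hanti : AntitoneOn gfun (Set.Icc x 1) := by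
      apply antitoneOn_of_deriv_nonpos (convex_Icc x 1)
      · intro y hy
        simp only [Set.mem_Icc] at hy
        exact ((gfun_hasDeriv (by linarith [hy.1] : (0:ℝ) < y)).continuousAt).continuousWithinAt
      · intro y hy
        rw [interior_Icc] at hy
        exact ((gfun_hasDeriv (by linarith [hy.1] : (0:ℝ) < y)).differentiableAt).differentiableWithinAt
      · intro y hy
        rw [interior_Icc] at hy
        rw [(gfun_hasDeriv (by linarith [hy.1] : (0:ℝ) < y)).deriv]
        exact hfun_nonpos (by linarith [hy.1]) hy.2.le
    have := hanti (Set.left_mem_Icc.mpr h1.le) (Set.right_mem_Icc.mpr h1.le) h1.le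
    rwa [hg1] at this

lemma key_ineq {a b : ℝ} (ha : 0 ≤ a) (hb : 0 < b) :
    3 * (a - b) ^ 2 / (2 * (a + 2 * b)) ≤ a * Real.log (a / b) - a + b := by
  rcases eq_or_lt_of_le ha with rfl | ha
  · simp only [zero_mul, zero_sub, zero_add]
    rw [div_le_iff₀ (by positivity)]
    nlinarith
  · have hx : 0 < a / b := div_pos ha hb
    have hg := gfun_nonneg hx
    have heq : b * gfun (a / b) =
        a * Real.log (a / b) - a + b - 3 * (a - b) ^ 2 / (2 * (a + 2 * b)) := by
      unfold gfun
      have hab : a + 2 * b ≠ 0 := by positivity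
      field_simp
    nlinarith [mul_nonneg hb.le hg]

theorem massart_ge_kl' (z θ : ℝ) (hz0 : 0 ≤ z) (hz1 : z ≤ 1) (hθ0 : 0 < θ) (hθ1 : θ < 1) :
    z * Real.log (θ / z) + (1 - z) * Real.log ((1 - θ) / (1 - z)) ≤
      9 * (z - θ) ^ 2 / (2 * (z + 2 * θ) * (z + 2 * θ - 3)) := by
  have h1z : (0:ℝ) ≤ 1 - z := by linarith
  have h1θ : (0:ℝ) < 1 - θ := by linarith
  have A := key_ineq hz0 hθ0
  have B := key_ineq h1z h1θ
  have e1 : z * Real.log (θ / z) = -(z * Real.log (z / θ)) := by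
    rcases eq_or_lt_of_le hz0 with rfl | hz
    · simp
    · rw [Real.log_div hθ0.ne' hz.ne', Real.log_div hz.ne' hθ0.ne']; ring
  have e2 : (1 - z) * Real.log ((1 - θ) / (1 - z)) = -((1 - z) * Real.log ((1 - z) / (1 - θ))) := by
    rcases eq_or_lt_of_le h1z with h | h
    · rw [← h]; simp
    · rw [Real.log_div h1θ.ne' h.ne', Real.log_div h.ne' h1θ.ne']; ring
  have hd1 : (0:ℝ) < z + 2 * θ := by linarith
  have hd2 : (0:ℝ) < 3 - z - 2 * θ := by linarith
  have eB : 3 * ((1 - z) - (1 - θ)) ^ 2 / (2 * ((1 - z) + 2 * (1 - θ)))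
      = 3 * (z - θ) ^ 2 / (2 * (3 - z - 2 * θ)) := by
    rw [show ((1 - z) - (1 - θ)) = -(z - θ) by ring,
      show ((1 - z) + 2 * (1 - θ)) = 3 - z - 2 * θ by ring]
    ring_nf
  rw [eB] at B
  have eS : 9 * (z - θ) ^ 2 / (2 * (z + 2 * θ) * (z + 2 * θ - 3))
      = -(3 * (z - θ) ^ 2 / (2 * (z + 2 * θ)) + 3 * (z - θ) ^ 2 / (2 * (3 - z - 2 * θ))) := by
    have h3 : z + 2 * θ - 3 ≠ 0 := by linarith
    rw [div_add_div _ _ (by positivity) (by positivity), ← neg_div,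
      div_eq_div_iff (mul_ne_zero (by positivity) h3) (by positivity)]
    ring
  rw [e1, e2, eS]
  linarith

/-- Massart's bound dominates the negative KL divergence:
`M'_B(z, θ) ≥ M_B(z, θ)` for `z ∈ [0,1]`, `θ ∈ (0,1)`. -/
theorem massart_ge_kl (z θ : ℝ) (hz0 : 0 ≤ z) (hz1 : z ≤ 1) (hθ0 : 0 < θ) (hθ1 : θ < 1) :
    MB z θ ≤ MB' z θ := by
  unfold MB MB'
  exact massart_ge_kl' z θ hz0 hz1 hθ0 hθ1
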